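/- Let F : ℝ₊^D → ℝ₊^D be continuous, order preserving, and positively homogeneous of degree 1. Then the limit lim_{k→∞} (max_{d∈D} (F^k(e))_d)^{1/k} exists and is equal to inf { λ > 0 : there exists X ∈ int ℝ₊^D with F(X) ≤ λ X }. -/

import Mathlib

open Filter

section Aux

variable {D : Type*} [Fintype D] [Nonempty D]

private def phiAux (F : (D → ℝ) → (D → ℝ)) (ε : ℝ) : ℕ → (D → ℝ)
  | 0 => fun _ => 1
  | j+1 => F (phiAux F ε j) + ε • phiAux F ε j

variable (F : (D → ℝ) → (D → ℝ))

private lemma iterNonneg (hmaps : ∀ X : D → ℝ, (∀ d, 0 ≤ X d) → ∀ d, 0 ≤ F X d)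
    (X : D → ℝ) (hX : ∀ d, 0 ≤ X d) : ∀ k, ∀ d, 0 ≤ F^[k] X d := by
  intro k
  induction k with
  | zero => simpa using hX
  | succ k ih =>
    intro d
    rw [Function.iterate_succ_apply']
    exact hmaps _ ih d

private lemma iterMono (hmaps : ∀ X : D → ℝ, (∀ d, 0 ≤ X d) → ∀ d, 0 ≤ F X d)
    (hmono : ∀ X Y : D → ℝ, (∀ d, 0 ≤ X d) → (∀ d, 0 ≤ Y d) →
      (∀ d, X d ≤ Y d) → ∀ d, F X d ≤ F Y d)
    (X Y : D → ℝ) (hX : ∀ d, 0 ≤ X d) (hY : ∀ d, 0 ≤ Y d)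
    (hXY : ∀ d, X d ≤ Y d) : ∀ k, ∀ d, F^[k] X d ≤ F^[k] Y d := by
  intro k
  induction k with
  | zero => simpa using hXY
  | succ k ih =>
    intro d
    rw [Function.iterate_succ_apply', Function.iterate_succ_apply']
    exact hmono _ _ (iterNonneg F hmaps X hX k) (iterNonneg F hmaps Y hY k) ih d

private lemma iterHomog (hmaps : ∀ X : D → ℝ, (∀ d, 0 ≤ X d) → ∀ d, 0 ≤ F X d)
    (hhom : ∀ (c : ℝ), 0 < c → ∀ X : D → ℝ, (∀ d, 0 ≤ X d) → F (c • X) = c • F X)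
    (c : ℝ) (hc : 0 < c) (X : D → ℝ) (hX : ∀ d, 0 ≤ X d) :
    ∀ k, F^[k] (c • X) = c • F^[k] X := by
  intro k
  induction k with
  | zero => simp
  | succ k ih =>
    rw [Function.iterate_succ_apply', Function.iterate_succ_apply', ih]
    exact hhom c hc _ (iterNonneg F hmaps X hX k)

private lemma iterGrowth (hmaps : ∀ X : D → ℝ, (∀ d, 0 ≤ X d) → ∀ d, 0 ≤ F X d)
    (hmono : ∀ X Y : D → ℝ, (∀ d, 0 ≤ X d) → (∀ d, 0 ≤ Y d) →
      (∀ d, X d ≤ Y d) → ∀ d, F X d ≤ F Y d)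
    (hhom : ∀ (c : ℝ), 0 < c → ∀ X : D → ℝ, (∀ d, 0 ≤ X d) → F (c • X) = c • F X)
    (lam : ℝ) (hl : 0 < lam) (X : D → ℝ) (hX : ∀ d, 0 ≤ X d)
    (hle : ∀ d, F X d ≤ lam * X d) : ∀ k, ∀ d, F^[k] X d ≤ lam ^ k * X d := by
  intro k
  induction k with
  | zero => simp
  | succ k ih =>
    intro d
    rw [Function.iterate_succ_apply']
    have h1 : ∀ d, 0 ≤ (lam ^ k • X) d := fun d => by
      have := hX d
      have := pow_pos hl k
      simp only [Pi.smul_apply, smul_eq_mul]; positivity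
    have h2 : F (F^[k] X) d ≤ F (lam ^ k • X) d :=
      hmono _ _ (iterNonneg F hmaps X hX k) h1 (fun d => by simpa using ih d) d
    have h3 : F (lam ^ k • X) d = lam ^ k * F X d := by
      rw [hhom (lam ^ k) (pow_pos hl k) X hX]; simp
    calc F (F^[k] X) d ≤ lam ^ k * F X d := by rw [← h3]; exact h2
      _ ≤ lam ^ k * (lam * X d) := by
          exact mul_le_mul_of_nonneg_left (hle d) (le_of_lt (pow_pos hl k))
      _ = lam ^ (k+1) * X d := by ring

private lemma phiNonneg (hmaps : ∀ X : D → ℝ, (∀ d, 0 ≤ X d) → ∀ d, 0 ≤ F X d)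
    {ε : ℝ} (hε : 0 ≤ ε) : ∀ j, ∀ d, 0 ≤ phiAux F ε j d := by
  intro j
  induction j with
  | zero => intro d; simp [phiAux]
  | succ j ih =>
    intro d
    simp only [phiAux, Pi.add_apply, Pi.smul_apply, smul_eq_mul]
    have := hmaps _ ih d
    have := ih d
    positivity

private lemma phiPos (hmaps : ∀ X : D → ℝ, (∀ d, 0 ≤ X d) → ∀ d, 0 ≤ F X d)
    {ε : ℝ} (hε : 0 < ε) : ∀ j, ∀ d, 0 < phiAux F ε j d := by
  intro j
  induction j with
  | zero => intro d; simp [phiAux]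
  | succ j ih =>
    intro d
    simp only [phiAux, Pi.add_apply, Pi.smul_apply, smul_eq_mul]
    have h1 := hmaps _ (phiNonneg F hmaps hε.le j) d
    have h2 := ih d
    positivity

private lemma phiTendsto (hmaps : ∀ X : D → ℝ, (∀ d, 0 ≤ X d) → ∀ d, 0 ≤ F X d)
    (hcont : ContinuousOn F {X : D → ℝ | ∀ d, 0 ≤ X d}) :
    ∀ j, Tendsto (fun ε => phiAux F ε j) (nhdsWithin 0 (Set.Ici (0:ℝ)))
      (nhds (F^[j] (fun _ => 1))) := by
  intro j
  induction j with
  | zero => simpa [phiAux] using (tendsto_const_nhds :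
      Tendsto (fun _ : ℝ => (fun _ : D => (1:ℝ))) _ _)
  | succ j ih =>
    have hmem : F^[j] (fun _ => (1:ℝ)) ∈ {X : D → ℝ | ∀ d, 0 ≤ X d} :=
      iterNonneg F hmaps _ (fun d => zero_le_one) j
    have hup : ∀ᶠ ε in nhdsWithin 0 (Set.Ici (0:ℝ)),
        phiAux F ε j ∈ {X : D → ℝ | ∀ d, 0 ≤ X d} := by
      filter_upwards [self_mem_nhdsWithin] with ε hε
      exact phiNonneg F hmaps hε j
    have h1 : Tendsto (fun ε => F (phiAux F ε j)) (nhdsWithin 0 (Set.Ici (0:ℝ)))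
        (nhds (F (F^[j] (fun _ => 1)))) :=
      Filter.Tendsto.comp (hcont _ hmem) (tendsto_nhdsWithin_iff.mpr ⟨ih, hup⟩)
    have h2 : Tendsto (fun ε : ℝ => ε • phiAux F ε j) (nhdsWithin 0 (Set.Ici (0:ℝ)))
        (nhds ((0:ℝ) • F^[j] (fun _ => 1))) :=
      Tendsto.smul (tendsto_id.mono_left nhdsWithin_le_nhds) ih
    have h3 := h1.add h2
    simp only [zero_smul, add_zero] at h3
    have heq : (fun ε : ℝ => F (phiAux F ε j) + ε • phiAux F ε j)
        = fun ε : ℝ => phiAux F ε (j+1) := by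
      funext ε; simp [phiAux]
    rw [heq] at h3
    rw [Function.iterate_succ_apply']
    exact h3

/-- Key lemma: if `F^[m] e < lam ^ m` coordinatewise then `lam` belongs to the
Collatz–Wielandt set. -/
private lemma keyLemma (hmaps : ∀ X : D → ℝ, (∀ d, 0 ≤ X d) → ∀ d, 0 ≤ F X d)
    (hcont : ContinuousOn F {X : D → ℝ | ∀ d, 0 ≤ X d})
    (hmono : ∀ X Y : D → ℝ, (∀ d, 0 ≤ X d) → (∀ d, 0 ≤ Y d) →
      (∀ d, X d ≤ Y d) → ∀ d, F X d ≤ F Y d)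
    (hhom : ∀ (c : ℝ), 0 < c → ∀ X : D → ℝ, (∀ d, 0 ≤ X d) → F (c • X) = c • F X)
    {lam : ℝ} (hl : 0 < lam) {m : ℕ} (hm : 1 ≤ m)
    (hsmall : ∀ d, F^[m] (fun _ => 1) d < lam ^ m) :
    ∃ X : D → ℝ, (∀ d, 0 < X d) ∧ ∀ d, F X d ≤ lam * X d := by
  -- choose a small ε > 0 such that phiAux F ε m ≤ lam ^ m coordinatewise
  have hev : ∀ᶠ ε in nhdsWithin 0 (Set.Ici (0:ℝ)),
      ∀ d, phiAux F ε m d ≤ lam ^ m := by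
    rw [eventually_all]
    intro d
    have hc : Tendsto (fun ε => phiAux F ε m d) (nhdsWithin 0 (Set.Ici (0:ℝ)))
        (nhds (F^[m] (fun _ => 1) d)) :=
      ((continuous_apply d).tendsto _).comp (phiTendsto F hmaps hcont m)
    filter_upwards [hc.eventually_lt_const (hsmall d)] with ε hε using hε.le
  have hne : (nhdsWithin 0 (Set.Ioi (0:ℝ))).NeBot := by infer_instance
  have hev' : ∀ᶠ ε in nhdsWithin 0 (Set.Ioi (0:ℝ)),
      (∀ d, phiAux F ε m d ≤ lam ^ m) ∧ ε ∈ Set.Ioi (0:ℝ) := by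
    refine Filter.Eventually.and ?_ self_mem_nhdsWithin
    exact hev.filter_mono (nhdsWithin_mono _ Set.Ioi_subset_Ici_self)
  obtain ⟨ε, hεsmall, hεpos⟩ := hev'.exists
  have hεpos : (0:ℝ) < ε := hεpos
  -- the candidate super-eigenvector
  have hrne : (Finset.range m).Nonempty := by
    simpa [Finset.nonempty_range_iff] using Nat.one_le_iff_ne_zero.mp hm
  set V : ℕ → D → ℝ := fun j => (lam ^ j)⁻¹ • phiAux F ε j with hV
  set X : D → ℝ := fun d => (Finset.range m).inf' hrne (fun j => V j d) with hX
  have hVpos : ∀ j d, 0 < V j d := fun j d => by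
    have := phiPos F hmaps hεpos j d
    have := pow_pos hl j
    simp only [hV, Pi.smul_apply, smul_eq_mul]
    positivity
  have hXpos : ∀ d, 0 < X d := by
    intro d
    rw [hX]
    exact (Finset.lt_inf'_iff hrne).mpr (fun j _ => hVpos j d)
  refine ⟨X, hXpos, ?_⟩
  -- F X ≤ (lam^j)⁻¹ * phiAux F ε (j+1), for each j < m
  have hbound : ∀ j < m, ∀ d, F X d ≤ (lam ^ j)⁻¹ * phiAux F ε (j+1) d := by
    intro j hj d
    have hXleV : ∀ d, X d ≤ V j d := fun d =>
      Finset.inf'_le _ (Finset.mem_range.mpr hj)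
    have hFle : F X d ≤ F (V j) d :=
      hmono X (V j) (fun d => (hXpos d).le) (fun d => (hVpos j d).le) hXleV d
    have hFV : F (V j) = (lam ^ j)⁻¹ • F (phiAux F ε j) :=
      hhom _ (inv_pos.mpr (pow_pos hl j)) _ (phiNonneg F hmaps hεpos.le j)
    have hstep : F (phiAux F ε j) d ≤ phiAux F ε (j+1) d := by
      simp only [phiAux, Pi.add_apply, Pi.smul_apply, smul_eq_mul]
      have h1 := phiNonneg F hmaps hεpos.le j d
      nlinarith
    calc F X d ≤ F (V j) d := hFle
      _ = (lam ^ j)⁻¹ * F (phiAux F ε j) d := by rw [hFV]; simp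
      _ ≤ (lam ^ j)⁻¹ * phiAux F ε (j+1) d := by
          exact mul_le_mul_of_nonneg_left hstep
            (inv_nonneg.mpr (pow_pos hl j).le)
  intro d
  -- the min is attained at some j₀
  obtain ⟨j₀, hj₀mem, hj₀⟩ := Finset.exists_mem_eq_inf' hrne (fun j => V j d)
  have hj₀m : j₀ < m := Finset.mem_range.mp hj₀mem
  have hXd : X d = V j₀ d := by rw [hX]; exact hj₀
  rcases Nat.eq_zero_or_pos j₀ with h0 | hpos
  · -- j₀ = 0 : lam * X d = lam, use j = m - 1
    have hXd1 : X d = 1 := by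
      rw [hXd, h0]; simp [hV, phiAux]
    have hb := hbound (m-1) (Nat.sub_lt (Nat.lt_of_lt_of_le Nat.zero_lt_one hm)
      Nat.zero_lt_one) d
    rw [Nat.sub_add_cancel hm] at hb
    have hφm : phiAux F ε m d ≤ lam ^ m := hεsmall d
    have hlm : (lam ^ (m-1))⁻¹ * phiAux F ε m d ≤ lam := by
      have h1 : (lam ^ (m-1))⁻¹ * phiAux F ε m d ≤ (lam ^ (m-1))⁻¹ * lam ^ m :=
        mul_le_mul_of_nonneg_left hφm (inv_nonneg.mpr (pow_pos hl _).le)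
      have h2 : (lam ^ (m-1))⁻¹ * lam ^ m = lam := by
        have hmeq : m = (m - 1) + 1 := (Nat.sub_add_cancel hm).symm
        rw [hmeq, pow_succ]
        field_simp
        simp
      linarith [h1, h2.le]
    rw [hXd1, mul_one]
    exact le_trans hb hlm
  · -- j₀ ≥ 1 : use j = j₀ - 1
    have hj₀m' : j₀ - 1 < m := lt_of_le_of_lt (Nat.sub_le _ _) hj₀m
    have hb := hbound (j₀-1) hj₀m' d
    rw [Nat.sub_add_cancel hpos] at hb
    have heq : (lam ^ (j₀-1))⁻¹ * phiAux F ε j₀ d = lam * V j₀ d := by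
      have hj : j₀ = (j₀ - 1) + 1 := (Nat.sub_add_cancel hpos).symm
      simp only [hV, Pi.smul_apply, smul_eq_mul]
      rw [hj, pow_succ]
      have h1 : (0:ℝ) < lam ^ (j₀-1) := pow_pos hl _
      field_simp
      ring_nf
      simp
    rw [hXd]
    rw [heq] at hb
    exact hb

end Aux

/-- For a continuous, order preserving, positively homogeneous
(degree 1) self-map F of the nonnegative orthant ℝ₊^D, the limit
lim_{k→∞} (max_d (F^k e)_d)^{1/k} exists and equals
inf { λ > 0 : ∃ X > 0 with F(X) ≤ λX }. -/
theorem growth_rate_eq_collatzWielandt_inf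
    {D : Type*} [Fintype D] [Nonempty D]
    (F : (D → ℝ) → (D → ℝ))
    (hmaps : ∀ X : D → ℝ, (∀ d, 0 ≤ X d) → ∀ d, 0 ≤ F X d)
    (hcont : ContinuousOn F {X : D → ℝ | ∀ d, 0 ≤ X d})
    (hmono : ∀ X Y : D → ℝ, (∀ d, 0 ≤ X d) → (∀ d, 0 ≤ Y d) →
      (∀ d, X d ≤ Y d) → ∀ d, F X d ≤ F Y d)
    (hhom : ∀ (c : ℝ), 0 < c → ∀ X : D → ℝ, (∀ d, 0 ≤ X d) →
      F (c • X) = c • F X) :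
    Tendsto (fun k : ℕ => (⨆ d, F^[k] (fun _ => 1) d) ^ ((1 : ℝ) / k))
      atTop
      (nhds (sInf {lam : ℝ | 0 < lam ∧
        ∃ X : D → ℝ, (∀ d, 0 < X d) ∧ ∀ d, F X d ≤ lam * X d})) := by
  classical
  set e : D → ℝ := fun _ => 1 with he
  set S : Set ℝ := {lam : ℝ | 0 < lam ∧
      ∃ X : D → ℝ, (∀ d, 0 < X d) ∧ ∀ d, F X d ≤ lam * X d} with hS
  set A : ℕ → ℝ := fun k => ⨆ d, F^[k] e d with hA
  have hepos : ∀ d, (0:ℝ) < e d := fun d => one_pos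
  have henn : ∀ d, (0:ℝ) ≤ e d := fun d => zero_le_one
  have hAnn : ∀ k, 0 ≤ A k := by
    intro k
    obtain ⟨d⟩ := (inferInstance : Nonempty D)
    exact le_trans (iterNonneg F hmaps e henn k d)
      (le_ciSup (Set.Finite.bddAbove (Set.finite_range _)) d)
  have hcoordA : ∀ k d, F^[k] e d ≤ A k := fun k d =>
    le_ciSup (Set.Finite.bddAbove (Set.finite_range _)) d
  -- S is nonempty: lam = A 1 + 1 works with X = e
  have hSne : S.Nonempty := by
    refine ⟨A 1 + 1, ⟨by linarith [hAnn 1], e, hepos, ?_⟩⟩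
    intro d
    have h1 : F e d ≤ A 1 := by simpa using hcoordA 1 d
    simp only [he, mul_one]
    linarith
  have hSbdd : BddBelow S := ⟨0, fun x hx => hx.1.le⟩
  set L : ℝ := sInf S with hL
  have hLnn : 0 ≤ L := le_csInf hSne (fun x hx => hx.1.le)
  -- upper bound from any element of S
  have hupper : ∀ lam ∈ S, ∃ C : ℝ, 1 ≤ C ∧ ∀ k, A k ≤ C * lam ^ k := by
    rintro lam ⟨hlpos, X, hXpos, hXle⟩
    set mX : ℝ := Finset.univ.inf' Finset.univ_nonempty X with hmX
    set MX : ℝ := Finset.univ.sup' Finset.univ_nonempty X with hMX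
    have hmXpos : 0 < mX := (Finset.lt_inf'_iff _).mpr (fun d _ => hXpos d)
    have hmXle : ∀ d, mX ≤ X d := fun d => Finset.inf'_le _ (Finset.mem_univ d)
    have hleMX : ∀ d, X d ≤ MX := fun d => Finset.le_sup' _ (Finset.mem_univ d)
    have hmM : mX ≤ MX := by
      obtain ⟨d⟩ := (inferInstance : Nonempty D)
      exact le_trans (hmXle d) (hleMX d)
    refine ⟨MX / mX, (one_le_div hmXpos).mpr hmM, ?_⟩
    intro k
    have hXnn : ∀ d, 0 ≤ X d := fun d => (hXpos d).le
    have hsc : ∀ d, 0 ≤ (mX⁻¹ • X) d := fun d => by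
      simp only [Pi.smul_apply, smul_eq_mul]
      exact mul_nonneg (inv_nonneg.mpr hmXpos.le) (hXnn d)
    have hle1 : ∀ d, e d ≤ (mX⁻¹ • X) d := by
      intro d
      simp only [Pi.smul_apply, smul_eq_mul, he]
      calc (1:ℝ) = mX⁻¹ * mX := (inv_mul_cancel₀ hmXpos.ne').symm
        _ ≤ mX⁻¹ * X d :=
            mul_le_mul_of_nonneg_left (hmXle d) (inv_nonneg.mpr hmXpos.le)
    refine ciSup_le (fun d => ?_)
    have h1 : F^[k] e d ≤ F^[k] (mX⁻¹ • X) d :=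
      iterMono F hmaps hmono e _ henn hsc hle1 k d
    have h2 : F^[k] (mX⁻¹ • X) = mX⁻¹ • F^[k] X :=
      iterHomog F hmaps hhom _ (inv_pos.mpr hmXpos) X hXnn k
    have h3 : F^[k] X d ≤ lam ^ k * X d :=
      iterGrowth F hmaps hmono hhom lam hlpos X hXnn hXle k d
    have h4 : F^[k] e d ≤ mX⁻¹ * F^[k] X d := by
      rw [← smul_eq_mul, ← Pi.smul_apply, ← h2]; exact h1
    have h5 : (0:ℝ) ≤ lam ^ k := (pow_pos hlpos k).le
    have h6 : mX⁻¹ * F^[k] X d ≤ mX⁻¹ * (lam ^ k * X d) :=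
      mul_le_mul_of_nonneg_left h3 (inv_nonneg.mpr hmXpos.le)
    have h7 : mX⁻¹ * (lam ^ k * X d) ≤ mX⁻¹ * (lam ^ k * MX) := by
      apply mul_le_mul_of_nonneg_left _ (inv_nonneg.mpr hmXpos.le)
      exact mul_le_mul_of_nonneg_left (hleMX d) h5
    have h8 : mX⁻¹ * (lam ^ k * MX) = MX / mX * lam ^ k := by ring
    linarith
  -- lower bound: L ≤ A k ^ (1/k) for k ≥ 1
  have hlow : ∀ k : ℕ, 1 ≤ k → L ≤ A k ^ ((1:ℝ)/k) := by
    intro k hk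
    by_contra hcon
    push_neg at hcon
    have hAr : (0:ℝ) ≤ A k ^ ((1:ℝ)/k) := Real.rpow_nonneg (hAnn k) _
    have hmax : max (A k ^ ((1:ℝ)/k)) 0 < L := by
      rw [max_eq_left hAr]; exact hcon
    obtain ⟨lam, hlam1, hlam2⟩ := exists_between hmax
    have hlpos : 0 < lam := lt_of_le_of_lt (le_max_right _ _) hlam1
    have hlt : A k ^ ((1:ℝ)/k) < lam := lt_of_le_of_lt (le_max_left _ _) hlam1
    have hkne : (k:ℝ) ≠ 0 := Nat.cast_ne_zero.mpr (Nat.one_le_iff_ne_zero.mp hk)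
    have hAklt : A k < lam ^ k := by
      have h1 : (A k ^ ((1:ℝ)/k)) ^ k < lam ^ k :=
        pow_lt_pow_left₀ hlt hAr (Nat.one_le_iff_ne_zero.mp hk)
      have h2 : (A k ^ ((1:ℝ)/k)) ^ k = A k := by
        rw [← Real.rpow_natCast (A k ^ ((1:ℝ)/k)) k, ← Real.rpow_mul (hAnn k),
          one_div, inv_mul_cancel₀ hkne, Real.rpow_one]
      rwa [h2] at h1
    have hmem : lam ∈ S := by
      obtain ⟨X, h1, h2⟩ := keyLemma F hmaps hcont hmono hhom hlpos hk
        (fun d => lt_of_le_of_lt (hcoordA k d) hAklt)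
      exact ⟨hlpos, X, h1, h2⟩
    exact absurd (csInf_le hSbdd hmem) (not_le.mpr hlam2)
  -- eventual upper bound
  have hupp : ∀ b : ℝ, L < b → ∀ᶠ k : ℕ in atTop, A k ^ ((1:ℝ)/k) < b := by
    intro b hb
    obtain ⟨lam, hlamS, hlamlt⟩ :=
      exists_lt_of_csInf_lt hSne (show sInf S < (L + b)/2 by rw [← hL]; linarith)
    have hlpos : 0 < lam := hlamS.1
    obtain ⟨C, hC1, hCk⟩ := hupper lam hlamS
    have hCpos : (0:ℝ) < C := lt_of_lt_of_le one_pos hC1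
    have htC : Tendsto (fun k : ℕ => C ^ ((1:ℝ)/k) * lam) atTop (nhds (1 * lam)) := by
      have h0 : Tendsto (fun k : ℕ => C ^ ((1:ℝ)/k)) atTop (nhds (C ^ (0:ℝ))) :=
        Tendsto.rpow tendsto_const_nhds tendsto_one_div_atTop_nhds_zero_nat
          (Or.inl hCpos.ne')
      rw [Real.rpow_zero] at h0
      exact h0.mul_const lam
    have hblt : 1 * lam < b := by
      rw [one_mul]; linarith
    filter_upwards [eventually_ge_atTop 1, htC.eventually_lt_const hblt] with k hk1 hk2
    have hkne : (k:ℝ) ≠ 0 := Nat.cast_ne_zero.mpr (Nat.one_le_iff_ne_zero.mp hk1)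
    have h1 : A k ^ ((1:ℝ)/k) ≤ (C * lam ^ k) ^ ((1:ℝ)/k) :=
      Real.rpow_le_rpow (hAnn k) (hCk k) (by positivity)
    have h2 : (C * lam ^ k) ^ ((1:ℝ)/k) = C ^ ((1:ℝ)/k) * lam := by
      rw [Real.mul_rpow hCpos.le (pow_nonneg hlpos.le k)]
      congr 1
      rw [← Real.rpow_natCast lam k, ← Real.rpow_mul hlpos.le]
      rw [mul_one_div, div_self hkne, Real.rpow_one]
    rw [h2] at h1
    exact lt_of_le_of_lt h1 hk2
  rw [show (nhds (sInf S)) = nhds L by rw [hL]]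
  rw [tendsto_order]
  constructor
  · intro b hbL
    filter_upwards [eventually_ge_atTop 1] with k hk
    exact lt_of_lt_of_le hbL (hlow k hk)
  · intro b hb
    exact hupp b hb
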